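/- Let G = ZMod 6 and let V = V_{3,G} ⊆ ℤ^(Fin 3 × G) be the set of vertex vectors of sockets of the tripod. For every v_0 ∈ V there exists a point x of ℤ^(Fin 3 × G) lying in the additive subgroup generated by {v − v_0 : v ∈ V} and in the convex cone of all nonnegative real linear combinations of {v − v_0 : v ∈ V}, such that x is not a finite sum of elements of {v − v_0 : v ∈ V}. In other words, the polytope of the tripod for ZMod 6 is not very ample, and the associated projective toric variety is not normal. -/

import Mathlib

open Pointwise

/-- The canonical map `ℤ^N → ℝ^N`. -/
def toReal {N : Type} (x : N → ℤ) : N → ℝ := fun i => (x i : ℝ)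

/-- A finite set `V ⊆ ℤ^N` is normal if for every positive integer `k`, every point of
`ℤ^N` lying both in the dilated polytope `k • convexHull ℝ V` and in the additive
subgroup of `ℤ^N` generated by `V` is a sum of `k` elements of `V` (with repetition
allowed). -/
def IsNormalSet {N : Type} (V : Set (N → ℤ)) : Prop :=
  ∀ k : ℕ, 0 < k → ∀ x : N → ℤ,
    toReal x ∈ (k : ℝ) • convexHull ℝ (toReal '' V) →
    x ∈ AddSubgroup.closure V →
    ∃ l : Multiset (N → ℤ), (∀ v ∈ l, v ∈ V) ∧ Multiset.card l = k ∧ l.sum = x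

/-- The vertex vector of a socket `g : Fin 3 → G` of the tripod `K_{3,1}`: the element
of `ℤ^(Fin 3 × G)` with coordinate `(i,h)` equal to `1` if `g i = h` and `0` otherwise. -/
def socketVec {G : Type} [DecidableEq G] (g : Fin 3 → G) : Fin 3 × G → ℤ :=
  fun p => if g p.1 = p.2 then 1 else 0

/-- The set `V_{3,G} ⊆ ℤ^(Fin 3 × G)` of vertex vectors of all sockets of the tripod
`K_{3,1}` (a socket is a function `g : Fin 3 → G` with `∑ i, g i = 0`). -/
def tripodVecs (G : Type) [AddCommGroup G] [DecidableEq G] : Set (Fin 3 × G → ℤ) :=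
  {v | ∃ g : Fin 3 → G, (∑ i : Fin 3, g i = 0) ∧ v = socketVec g}

/-! ### Auxiliary definitions -/

/-- A helper for writing functions `ZMod 6 → ℤ` as tables. -/
def tb (a b c d e f : ℤ) : ZMod 6 → ℤ := fun h =>
  if h = 0 then a else if h = 1 then b else if h = 2 then c
  else if h = 3 then d else if h = 4 then e else f

/-- A helper for writing functions `ZMod 6 → Fin 11` as tables. -/
def pk (a b c d e f : Fin 11) : ZMod 6 → Fin 11 := fun h =>
  if h = 0 then a else if h = 1 then b else if h = 2 then c
  else if h = 3 then d else if h = 4 then e else f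

/-- The socket with first two values `a`, `b`. -/
def sk (a b : ZMod 6) : Fin 3 → ZMod 6 := ![a, b, -a-b]

/-- Difference of a vertex vector and the base vertex `socketVec 0`. -/
def dvec (a b : ZMod 6) : Fin 3 × ZMod 6 → ℤ :=
  socketVec (sk a b) - socketVec (0 : Fin 3 → ZMod 6)

/-- The witness lattice point (for the base vertex `socketVec 0`). -/
def xw : Fin 3 × ZMod 6 → ℤ := fun p => tb (-3) 1 0 1 1 0 p.2

/-- The separating linear functionals. -/
def phi : Fin 11 → Fin 3 × ZMod 6 → ℤ := ![
  fun p => ![tb 1 (-1) 0 1 (-1) 0, tb (-2) (-1) 0 (-2) (-1) 0, tb (-2) (-1) 0 (-2) (-1) 0] p.1 p.2,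
  fun p => ![tb (-1) 1 0 (-1) 1 0, tb (-1) (-2) 0 (-1) (-2) 0, tb (-1) (-2) 0 (-1) (-2) 0] p.1 p.2,
  fun p => ![tb 0 0 1 0 0 0, tb 0 0 0 0 0 0, tb 0 0 0 0 0 0] p.1 p.2,
  fun p => ![tb (-1) (-1) (-1) (-1) (-1) 0, tb 0 0 0 0 0 0, tb 0 0 0 0 0 0] p.1 p.2,
  fun p => ![tb (-1) 1 0 (-1) (-2) 0, tb (-1) 1 0 (-1) (-2) 0, tb (-1) (-2) 0 (-1) 1 0] p.1 p.2,
  fun p => ![tb (-2) (-1) 0 1 (-1) 0, tb (-2) (-1) 0 1 (-1) 0, tb 1 (-1) 0 (-2) (-1) 0] p.1 p.2,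
  fun p => ![tb (-1) (-2) 0 (-1) 1 0, tb (-1) 1 0 (-1) (-2) 0, tb (-1) 1 0 (-1) (-2) 0] p.1 p.2,
  fun p => ![tb (-1) 1 0 (-1) (-2) 0, tb (-1) (-2) 0 (-1) 1 0, tb (-1) 1 0 (-1) (-2) 0] p.1 p.2,
  fun p => ![tb (-2) (-1) 0 1 (-1) 0, tb 1 (-1) 0 (-2) (-1) 0, tb (-2) (-1) 0 1 (-1) 0] p.1 p.2,
  fun p => ![tb 1 (-1) 0 (-2) (-1) 0, tb (-2) (-1) 0 1 (-1) 0, tb (-2) (-1) 0 1 (-1) 0] p.1 p.2,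
  fun p => ![tb (-1) (-2) 0 (-1) 1 0, tb (-1) (-2) 0 (-1) 1 0, tb (-1) (-2) 0 (-1) 1 0] p.1 p.2]

/-- Which separating functional to use for each nonzero socket. -/
def pick : ZMod 6 → ZMod 6 → Fin 11 := fun a =>
  ![pk 0 0 0 9 0 0, pk 1 4 1 1 7 1, pk 2 2 0 2 2 0,
    pk 8 0 0 5 0 0, pk 1 6 1 1 10 1, pk 3 3 0 3 3 0] (a : Fin 6)

/-- Integer dot product on `ℤ^(Fin 3 × ZMod 6)`. -/
def dt (φ y : Fin 3 × ZMod 6 → ℤ) : ℤ := ∑ p, φ p * y p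

/-- `dt φ` as an additive homomorphism. -/
def dtHom (φ : Fin 3 × ZMod 6 → ℤ) : (Fin 3 × ZMod 6 → ℤ) →+ ℤ where
  toFun := dt φ
  map_zero' := by simp [dt]
  map_add' y z := by simp [dt, mul_add, Finset.sum_add_distrib]

lemma sk_sum (a b : ZMod 6) : ∑ i, sk a b i = 0 := by
  rw [Fin.sum_univ_three]
  show a + b + (-a - b) = 0
  ring

lemma sk_mem (a b : ZMod 6) : socketVec (sk a b) ∈ tripodVecs (ZMod 6) :=
  ⟨sk a b, sk_sum a b, rfl⟩

lemma dvec_mem (a b : ZMod 6) :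
    dvec a b ∈ (fun v => v - socketVec (0 : Fin 3 → ZMod 6)) '' tripodVecs (ZMod 6) :=
  ⟨socketVec (sk a b), sk_mem a b, rfl⟩

lemma socket_eq (g : Fin 3 → ZMod 6) (hg : ∑ i, g i = 0) : g = sk (g 0) (g 1) := by
  rw [Fin.sum_univ_three] at hg
  funext i
  fin_cases i
  · rfl
  · rfl
  · show g 2 = -(g 0) - (g 1)
    linear_combination hg

/-! ### Finite certificate checks -/

lemma C1 : ∀ k : Fin 11, ∀ a b : ZMod 6, 0 ≤ dt (phi k) (dvec a b) := by decide

lemma C2 : ∀ a b : ZMod 6, ¬(a = 0 ∧ b = 0) →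
    dt (phi (pick a b)) xw < dt (phi (pick a b)) (dvec a b) := by decide

/-! ### The three properties at the base vertex -/

lemma base_closure :
    xw ∈ AddSubgroup.closure
      ((fun v => v - socketVec (0 : Fin 3 → ZMod 6)) '' tripodVecs (ZMod 6)) := by
  have E : xw = dvec 0 1 + dvec 0 2 + dvec 0 3 - dvec 0 4 - dvec 0 5 - dvec 1 0 - dvec 1 2
      + (2 : ℤ) • dvec 1 4 + dvec 1 5 + dvec 3 0 + dvec 4 0 := by
    funext p; revert p; decide
  have m : ∀ a b : ZMod 6, dvec a b ∈ AddSubgroup.closure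
      ((fun v => v - socketVec (0 : Fin 3 → ZMod 6)) '' tripodVecs (ZMod 6)) :=
    fun a b => AddSubgroup.subset_closure (dvec_mem a b)
  rw [E]
  exact add_mem (add_mem (add_mem (add_mem (sub_mem (sub_mem (sub_mem (sub_mem
    (add_mem (add_mem (m 0 1) (m 0 2)) (m 0 3)) (m 0 4)) (m 0 5)) (m 1 0)) (m 1 2))
    (zsmul_mem (m 1 4) 2)) (m 1 5)) (m 3 0)) (m 4 0)

lemma base_cone :
    ∃ (s : Finset (Fin 3 × ZMod 6 → ℤ)) (w : (Fin 3 × ZMod 6 → ℤ) → ℝ),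
      (∀ u ∈ s, 0 ≤ w u ∧
        u ∈ (fun v => v - socketVec (0 : Fin 3 → ZMod 6)) '' tripodVecs (ZMod 6)) ∧
      toReal xw = ∑ u ∈ s, w u • toReal u := by
  classical
  refine ⟨{dvec 0 3, dvec 1 1, dvec 1 4, dvec 3 0, dvec 3 3, dvec 4 1, dvec 4 4},
    fun _ => 2⁻¹, ?_, ?_⟩
  · intro u hu
    refine ⟨by norm_num, ?_⟩
    simp only [Finset.mem_insert, Finset.mem_singleton] at hu
    rcases hu with rfl | rfl | rfl | rfl | rfl | rfl | rfl <;> exact dvec_mem _ _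
  · have key : ∀ p, (2 : ℤ) * xw p = dvec 0 3 p + dvec 1 1 p + dvec 1 4 p + dvec 3 0 p
        + dvec 3 3 p + dvec 4 1 p + dvec 4 4 p := by decide
    funext p
    rw [Finset.sum_apply]
    rw [Finset.sum_insert (by decide), Finset.sum_insert (by decide),
      Finset.sum_insert (by decide), Finset.sum_insert (by decide),
      Finset.sum_insert (by decide), Finset.sum_insert (by decide), Finset.sum_singleton]
    have hr := congrArg (fun z : ℤ => (z : ℝ)) (key p)
    push_cast at hr
    simp only [Pi.smul_apply, smul_eq_mul, toReal]
    linarith [hr]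

lemma base_nomulti :
    ¬ ∃ l : Multiset (Fin 3 × ZMod 6 → ℤ),
      (∀ u ∈ l, u ∈ (fun v => v - socketVec (0 : Fin 3 → ZMod 6)) '' tripodVecs (ZMod 6)) ∧
      l.sum = xw := by
  rintro ⟨l, hl, hsum⟩
  by_cases hz : ∀ u ∈ l, u = 0
  · have h0 : l.sum = 0 := Multiset.sum_eq_zero hz
    rw [hsum] at h0
    exact absurd (congrFun h0 ((0 : Fin 3), (1 : ZMod 6))) (by decide)
  · push_neg at hz
    obtain ⟨u, hul, hu0⟩ := hz
    obtain ⟨v, ⟨g, hg, rfl⟩, rfl⟩ := hl u hul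
    have hgg := socket_eq g hg
    have hne : ¬(g 0 = 0 ∧ g 1 = 0) := by
      rintro ⟨h0, h1⟩
      apply hu0
      rw [hgg, h0, h1]
      funext p; revert p; decide
    set k := pick (g 0) (g 1) with hk
    have hlt : dt (phi k) xw < dt (phi k) (dvec (g 0) (g 1)) := C2 (g 0) (g 1) hne
    have hnn : ∀ z ∈ l.map (dtHom (phi k)), 0 ≤ z := by
      intro z hz'
      obtain ⟨u', hu', rfl⟩ := Multiset.mem_map.mp hz'
      obtain ⟨v', ⟨g', hg', rfl⟩, rfl⟩ := hl u' hu'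
      rw [socket_eq g' hg']
      exact C1 k (g' 0) (g' 1)
    have h3 := Multiset.single_le_sum hnn _ (Multiset.mem_map_of_mem (dtHom (phi k)) hul)
    rw [← map_multiset_sum, hsum] at h3
    rw [hgg] at h3
    exact absurd hlt (not_lt.mpr h3)

/-! ### Transfer to an arbitrary vertex via the shift symmetry -/

/-- Shifting the group coordinate in each row. -/
def shiftP (g₀ : Fin 3 → ZMod 6) : (Fin 3 × ZMod 6) ≃ (Fin 3 × ZMod 6) where
  toFun p := (p.1, p.2 + g₀ p.1)
  invFun p := (p.1, p.2 - g₀ p.1)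
  left_inv p := by simp
  right_inv p := by simp

/-- The corresponding additive automorphism of `ℤ^(Fin 3 × ZMod 6)`. -/
def shiftA (g₀ : Fin 3 → ZMod 6) : (Fin 3 × ZMod 6 → ℤ) ≃+ (Fin 3 × ZMod 6 → ℤ) where
  toFun y := y ∘ shiftP g₀
  invFun y := y ∘ (shiftP g₀).symm
  left_inv y := by funext p; simp
  right_inv y := by funext p; simp
  map_add' y z := rfl

lemma shiftA_apply (g₀ : Fin 3 → ZMod 6) (y : Fin 3 × ZMod 6 → ℤ) (p : Fin 3 × ZMod 6) :
    shiftA g₀ y p = y (p.1, p.2 + g₀ p.1) := rfl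

lemma shiftA_symm_apply (g₀ : Fin 3 → ZMod 6) (y : Fin 3 × ZMod 6 → ℤ) (p : Fin 3 × ZMod 6) :
    (shiftA g₀).symm y p = y (p.1, p.2 - g₀ p.1) := rfl

lemma shift_socket (g₀ g : Fin 3 → ZMod 6) :
    shiftA g₀ (socketVec g) = socketVec (g - g₀) := by
  funext p
  rw [shiftA_apply]
  simp only [socketVec, Pi.sub_apply, sub_eq_iff_eq_add]

lemma shift_image (g₀ : Fin 3 → ZMod 6) (hg₀ : ∑ i, g₀ i = 0) :
    (shiftA g₀) '' ((fun v => v - socketVec g₀) '' tripodVecs (ZMod 6)) =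
      (fun v => v - socketVec (0 : Fin 3 → ZMod 6)) '' tripodVecs (ZMod 6) := by
  ext d
  constructor
  · rintro ⟨u, ⟨v, ⟨g, hg, rfl⟩, rfl⟩, rfl⟩
    refine ⟨socketVec (g - g₀), ⟨g - g₀, ?_, rfl⟩, ?_⟩
    · simp only [Pi.sub_apply, Finset.sum_sub_distrib, hg, hg₀, sub_zero]
    · show socketVec (g - g₀) - socketVec 0 = shiftA g₀ (socketVec g - socketVec g₀)
      rw [map_sub, shift_socket, shift_socket, sub_self]
  · rintro ⟨v, ⟨c, hc, rfl⟩, rfl⟩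
    refine ⟨socketVec (c + g₀) - socketVec g₀, ⟨socketVec (c + g₀), ⟨c + g₀, ?_, rfl⟩, rfl⟩, ?_⟩
    · simp only [Pi.add_apply, Finset.sum_add_distrib, hc, hg₀, add_zero]
    · show shiftA g₀ (socketVec (c + g₀) - socketVec g₀) = socketVec c - socketVec 0
      rw [map_sub, shift_socket, shift_socket, add_sub_cancel_right, sub_self]

/-- The polytope of the tripod for `G = ℤ/6` is not very ample. -/
theorem tripod_zmod6_not_very_ample :
    ∀ v₀ ∈ tripodVecs (ZMod 6),
      ∃ x : Fin 3 × ZMod 6 → ℤ,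
        x ∈ AddSubgroup.closure ((fun v => v - v₀) '' tripodVecs (ZMod 6)) ∧
        (∃ (s : Finset (Fin 3 × ZMod 6 → ℤ)) (w : (Fin 3 × ZMod 6 → ℤ) → ℝ),
          (∀ u ∈ s, 0 ≤ w u ∧ u ∈ (fun v => v - v₀) '' tripodVecs (ZMod 6)) ∧
          toReal x = ∑ u ∈ s, w u • toReal u) ∧
        ¬ ∃ l : Multiset (Fin 3 × ZMod 6 → ℤ),
            (∀ u ∈ l, u ∈ (fun v => v - v₀) '' tripodVecs (ZMod 6)) ∧ l.sum = x := by
  rintro v₀ ⟨g₀, hg₀, rfl⟩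
  have himg := shift_image g₀ hg₀
  refine ⟨(shiftA g₀).symm xw, ?_, ?_, ?_⟩
  · have hmapcl : AddSubgroup.closure
        ((fun v => v - socketVec (0 : Fin 3 → ZMod 6)) '' tripodVecs (ZMod 6)) =
        AddSubgroup.map (shiftA g₀).toAddMonoidHom
          (AddSubgroup.closure ((fun v => v - socketVec g₀) '' tripodVecs (ZMod 6))) := by
      rw [AddMonoidHom.map_closure, AddEquiv.coe_toAddMonoidHom, himg]
    have hx := base_closure
    rw [hmapcl, AddSubgroup.mem_map_equiv] at hx
    exact hx
  · obtain ⟨s, w, hsw, hseq⟩ := base_cone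
    classical
    refine ⟨s.image (shiftA g₀).symm, w ∘ (shiftA g₀), ?_, ?_⟩
    · intro u hu
      obtain ⟨u₀, hu₀, rfl⟩ := Finset.mem_image.mp hu
      obtain ⟨hw, hmem⟩ := hsw u₀ hu₀
      constructor
      · simpa using hw
      · rw [← himg] at hmem
        obtain ⟨u', hu', rfl⟩ := hmem
        simpa using hu'
    · rw [Finset.sum_image (fun x _ y _ h => (shiftA g₀).symm.injective h)]
      funext p
      have hb := congrFun hseq (p.1, p.2 - g₀ p.1)
      rw [Finset.sum_apply] at hb
      rw [Finset.sum_apply]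
      simp only [Pi.smul_apply, smul_eq_mul, Function.comp_apply,
        AddEquiv.apply_symm_apply, toReal, shiftA_symm_apply] at hb ⊢
      exact hb
  · rintro ⟨l, hl, hls⟩
    refine base_nomulti ⟨l.map (shiftA g₀), ?_, ?_⟩
    · intro u hu
      obtain ⟨u', hu', rfl⟩ := Multiset.mem_map.mp hu
      rw [← himg]
      exact Set.mem_image_of_mem _ (hl u' hu')
    · calc (l.map (shiftA g₀)).sum = (shiftA g₀) l.sum := (map_multiset_sum _ l).symm
        _ = xw := by rw [hls]; exact (shiftA g₀).apply_symm_apply xw
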